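/- Fix n ≥ 2 and a, b, c, d ∈ ℂ with ad − bc ≠ 0, and let φ(z) = (α z + β)/(γ z + δ) be a Möbius transformation (α δ − β γ ≠ 0). The conjugate map g = φ ∘ f ∘ φ⁻¹ of f(z) = (a z^n + b)/(c z^n + d) has critical points c₁ = φ(∞), c₂ = φ(0) and critical values v₁ = φ(a/c), v₂ = φ(b/d). Assume c ≠ 0, d ≠ 0, γ ≠ 0, δ ≠ 0, γ a + δ c ≠ 0 and γ b + δ d ≠ 0, so that c₁ = α/γ, c₂ = β/δ, v₁ = (α a + β c)/(γ a + δ c) and v₂ = (α b + β d)/(γ b + δ d) are all finite. Then c₁ ≠ c₂, v₁ ≠ v₂, and ((c₁ − v₁)(c₂ − v₂))/((c₁ − c₂)(v₁ − v₂)) = −bc/(ad − bc). (Lemma 1.7: the invariant X equals the negative of the cross-ratio of the critical points and critical values.) -/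

import Mathlib

/-- Lemma 1.7: for a bicritical map `f(z) = (a z^n + b)/(c z^n + d)` conjugated
by a Möbius map `φ(z) = (α z + β)/(γ z + δ)`, the critical points
`c₁ = φ(∞) = α/γ`, `c₂ = φ(0) = β/δ` and critical values
`v₁ = φ(a/c)`, `v₂ = φ(b/d)` of the conjugate map satisfy `c₁ ≠ c₂`,
`v₁ ≠ v₂`, and the cross-ratio identity
`(c₁ - v₁)(c₂ - v₂) / ((c₁ - c₂)(v₁ - v₂)) = -bc/(ad - bc)`,
i.e. the invariant `X` is the negative of this cross-ratio. -/
theorem stmt8 (n : ℕ) (hn : 2 ≤ n) (a b c d α β γ δ : ℂ)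
    (hf : a * d - b * c ≠ 0) (hmob : α * δ - β * γ ≠ 0)
    (hc : c ≠ 0) (hd : d ≠ 0) (hγ : γ ≠ 0) (hδ : δ ≠ 0)
    (h1 : γ * a + δ * c ≠ 0) (h2 : γ * b + δ * d ≠ 0) :
    let c₁ : ℂ := α / γ
    let c₂ : ℂ := β / δ
    let v₁ : ℂ := (α * a + β * c) / (γ * a + δ * c)
    let v₂ : ℂ := (α * b + β * d) / (γ * b + δ * d)
    c₁ ≠ c₂ ∧ v₁ ≠ v₂ ∧
      (c₁ - v₁) * (c₂ - v₂) / ((c₁ - c₂) * (v₁ - v₂)) =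
        -(b * c) / (a * d - b * c) := by
  have e1 : α / γ - β / δ = (α * δ - β * γ) / (γ * δ) := by
    field_simp
  have e2 : (α * a + β * c) / (γ * a + δ * c) - (α * b + β * d) / (γ * b + δ * d)
      = ((α * δ - β * γ) * (a * d - b * c)) / ((γ * a + δ * c) * (γ * b + δ * d)) := by
    rw [div_sub_div _ _ h1 h2]; congr 1; ring
  have hne1 : α / γ - β / δ ≠ 0 := by
    rw [e1]; exact div_ne_zero hmob (mul_ne_zero hγ hδ)
  have hne2 : (α * a + β * c) / (γ * a + δ * c) - (α * b + β * d) / (γ * b + δ * d) ≠ 0 := by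
    rw [e2]; exact div_ne_zero (mul_ne_zero hmob hf) (mul_ne_zero h1 h2)
  refine ⟨sub_ne_zero.mp hne1, sub_ne_zero.mp hne2, ?_⟩
  have e3 : α / γ - (α * a + β * c) / (γ * a + δ * c)
      = ((α * δ - β * γ) * c) / (γ * (γ * a + δ * c)) := by
    rw [div_sub_div _ _ hγ h1]; congr 1; ring
  have e4 : β / δ - (α * b + β * d) / (γ * b + δ * d)
      = -((α * δ - β * γ) * b) / (δ * (γ * b + δ * d)) := by
    rw [div_sub_div _ _ hδ h2]; congr 1; ring
  rw [e1, e2, e3, e4]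
  field_simp
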